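/- Let X be a locally compact Hausdorff space and let (A, {π_x : A → A_x}_{x∈X}, X) be a field of C*-algebras over X: A and each A_x are C*-algebras, each π_x is a surjective *-homomorphism, ‖a‖ = sup_{x∈X} ‖π_x(a)‖ for every a ∈ A, A carries a C₀(X,ℂ)-module structure (f,a) ↦ f·a satisfying π_x(f·a) = f(x)·π_x(a) for all x ∈ X, f·(ab) = (f·a)b = a(f·b), (fg)·a = f·(g·a), and the closed linear span of {f·a : f ∈ C₀(X,ℂ), a ∈ A} is all of A. Fix x₀ ∈ X, and let C_{x₀}(X)A denote the closed linear span in A of {f·a : f ∈ C₀(X,ℂ), f(x₀) = 0, a ∈ A}. Then the function x ↦ ‖π_x(a)‖ is upper semicontinuous at x₀ for every a ∈ A if and only if ker π_{x₀} = C_{x₀}(X)A. -/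
import Mathlib


open scoped ZeroAtInfty

private lemma usc_aux_arith {t y p : ℝ} (hp0 : 0 ≤ p) (hy0 : 0 < y) (hyt : t * t < y * y)
    (h : p * p ≤ t * t + (y * y - t * t) / 2 + (y * y - t * t) / 4) : p < y := by
  nlinarith

theorem usc_at_iff_ker_eq {X : Type*} [TopologicalSpace X] [LocallyCompactSpace X] [T2Space X]
    {A : Type*} [NormedRing A] [StarRing A] [CStarRing A] [NormedAlgebra ℂ A]
    [StarModule ℂ A] [CompleteSpace A]
    {B : X → Type*} [∀ x, NormedRing (B x)] [∀ x, StarRing (B x)] [∀ x, CStarRing (B x)]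
    [∀ x, NormedAlgebra ℂ (B x)] [∀ x, StarModule ℂ (B x)] [∀ x, CompleteSpace (B x)]
    -- the fibre maps: surjective *-homomorphisms computing the norm of `A`
    (π : ∀ x : X, A →⋆ₐ[ℂ] B x)
    (hsurj : ∀ x : X, Function.Surjective (π x))
    (hnorm : ∀ a : A, ‖a‖ = ⨆ x : X, ‖π x a‖)
    -- the `C₀(X,ℂ)`-module structure `(f, a) ↦ m f a` on `A`
    (m : C₀(X, ℂ) → A → A)
    (hm_pi : ∀ (x : X) (f : C₀(X, ℂ)) (a : A), π x (m f a) = f x • π x a)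
    (hm_add_left : ∀ (f g : C₀(X, ℂ)) (a : A), m (f + g) a = m f a + m g a)
    (hm_add_right : ∀ (f : C₀(X, ℂ)) (a b : A), m f (a + b) = m f a + m f b)
    (hm_mul_left : ∀ (f : C₀(X, ℂ)) (a b : A), m f (a * b) = (m f a) * b)
    (hm_mul_right : ∀ (f : C₀(X, ℂ)) (a b : A), m f (a * b) = a * (m f b))
    (hm_comp : ∀ (f g : C₀(X, ℂ)) (a : A), m (f * g) a = m f (m g a))
    -- nondegeneracy: the closed linear span of `{m f a}` is all of `A`
    (hnondeg : closure (Submodule.span ℂ {y : A | ∃ (f : C₀(X, ℂ)) (a : A), y = m f a} : Set A)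
      = Set.univ)
    (x₀ : X) :
    (∀ a : A, UpperSemicontinuousAt (fun x : X => ‖π x a‖) x₀) ↔
      {a : A | π x₀ a = 0} =
        closure (Submodule.span ℂ
          {y : A | ∃ (f : C₀(X, ℂ)) (a : A), f x₀ = 0 ∧ y = m f a} : Set A) := by
  letI : CStarAlgebra A := {}
  letI : ∀ x, CStarAlgebra (B x) := fun x => {}
  set S : Set A := {y : A | ∃ (f : C₀(X, ℂ)) (a : A), y = m f a} with hS
  set S₀ : Set A := {y : A | ∃ (f : C₀(X, ℂ)) (a : A), f x₀ = 0 ∧ y = m f a} with hS₀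
  have hπle : ∀ (x : X) (v : A), ‖π x v‖ ≤ ‖v‖ := fun x v =>
    NonUnitalStarAlgHom.norm_apply_le (π x) v
  have hπcont : ∀ x : X, Continuous (π x) := fun x =>
    AddMonoidHomClass.continuous_of_bound (π x) 1 (fun v => by simpa using hπle x v)
  have hsup_le : ∀ (v : A) (C : ℝ), 0 ≤ C → (∀ x, ‖π x v‖ ≤ C) → ‖v‖ ≤ C := fun v C hC h =>
    (hnorm v) ▸ Real.iSup_le h hC
  have hsep : ∀ v : A, (∀ x, π x v = 0) → v = 0 := fun v h =>
    norm_le_zero_iff.mp (hsup_le v 0 le_rfl fun x => by simp [h x])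
  have hm_smul : ∀ (f : C₀(X, ℂ)) (c : ℂ) (v : A), m f (c • v) = c • m f v := by
    intro f c v
    refine sub_eq_zero.mp (hsep _ fun x => ?_)
    rw [map_sub, map_smul, hm_pi, map_smul, hm_pi, smul_comm, sub_self]
  constructor
  · -- usc implies kernel description
    intro hu
    apply Set.Subset.antisymm
    · -- the hard inclusion: ker π x₀ ⊆ closure (span S₀)
      intro a ha
      simp only [Set.mem_setOf_eq] at ha
      rw [Metric.mem_closure_iff]
      intro ε hε
      have haU : a ∈ closure (Submodule.span ℂ S : Set A) := by rw [hnondeg]; trivial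
      obtain ⟨b, hbmem, hab⟩ := Metric.mem_closure_iff.mp haU (ε/3) (by linarith)
      rw [dist_eq_norm] at hab
      have h0 : (fun x : X => ‖π x a‖) x₀ < ε/3 := by
        simp only [ha, norm_zero]; linarith
      obtain ⟨U, hU, hUs⟩ := (hu a (ε/3) h0).exists_mem
      -- construct the bump function
      obtain ⟨V, hVU, hVopen, hx₀V⟩ := mem_nhds_iff.mp hU
      obtain ⟨f, hf1, hf0, hfcs, hf01⟩ := exists_continuous_one_zero_of_isCompact
        (isCompact_singleton (x := x₀)) (hVopen.isClosed_compl)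
        (by simpa [Set.disjoint_compl_right_iff_subset] using Set.singleton_subset_iff.mpr hx₀V)
      have hgc : Continuous fun x => (f x : ℂ) := Complex.continuous_ofReal.comp f.continuous
      have hcs : HasCompactSupport fun x => (f x : ℂ) :=
        hfcs.comp_left (g := Complex.ofReal) Complex.ofReal_zero
      let fC : C₀(X, ℂ) := ⟨⟨_, hgc⟩, hcs.is_zero_at_infty⟩
      have hfC1 : fC x₀ = 1 := by
        show ((f x₀ : ℝ) : ℂ) = 1
        rw [hf1 rfl]; norm_num
      have hfCle : ∀ x, ‖fC x‖ ≤ 1 := by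
        intro x
        show ‖((f x : ℝ) : ℂ)‖ ≤ 1
        rw [Complex.norm_real, Real.norm_eq_abs, abs_le]
        exact ⟨by linarith [(hf01 x).1], (hf01 x).2⟩
      have hfCsupp : ∀ x, fC x ≠ 0 → x ∈ U := by
        intro x hx
        by_contra hxU
        have hxV : x ∈ Vᶜ := fun hxV => hxU (hVU hxV)
        exact hx (by show ((f x : ℝ) : ℂ) = 0; rw [hf0 hxV]; norm_num)
      -- the linear map v ↦ v - fC • v
      let T : A →ₗ[ℂ] A :=
        { toFun := fun v => v - m fC v
          map_add' := fun v w => by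
            show v + w - m fC (v + w) = (v - m fC v) + (w - m fC w)
            rw [hm_add_right]; abel
          map_smul' := fun c v => by
            show c • v - m fC (c • v) = c • (v - m fC v)
            rw [hm_smul, smul_sub] }
      have hTb : T b ∈ Submodule.span ℂ S₀ := by
        have hle : Submodule.span ℂ S ≤ (Submodule.span ℂ S₀).comap T := by
          rw [Submodule.span_le]
          rintro y ⟨g, c, rfl⟩
          have he : m g c - m fC (m g c) = m (g - fC * g) c := by
            have h1 : m ((g - fC * g) + fC * g) c = m (g - fC * g) c + m (fC * g) c :=
              hm_add_left _ _ _
            rw [sub_add_cancel, hm_comp] at h1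
            exact sub_eq_iff_eq_add.mpr h1
          refine Submodule.mem_comap.mpr (Submodule.subset_span ?_)
          refine ⟨g - fC * g, c, ?_, ?_⟩
          · simp [hfC1]
          · exact he
        exact hle hbmem
      refine ⟨T b, hTb, ?_⟩
      -- estimates
      have hmfa : ‖m fC a‖ ≤ ε/3 := by
        refine hsup_le _ _ (by linarith) fun x => ?_
        rw [hm_pi, norm_smul]
        by_cases hx : fC x = 0
        · simp [hx]; linarith
        · calc ‖fC x‖ * ‖π x a‖ ≤ 1 * (ε/3) := by
                refine mul_le_mul (hfCle x) (le_of_lt (hUs x (hfCsupp x hx))) (norm_nonneg _)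
                  zero_le_one
          _ = ε/3 := one_mul _
      have hmfba : ‖m fC (b - a)‖ ≤ ‖b - a‖ := by
        refine hsup_le _ _ (norm_nonneg _) fun x => ?_
        rw [hm_pi, norm_smul]
        calc ‖fC x‖ * ‖π x (b - a)‖ ≤ 1 * ‖b - a‖ :=
              mul_le_mul (hfCle x) (hπle x _) (norm_nonneg _) zero_le_one
        _ = ‖b - a‖ := one_mul _
      have hsplit : m fC b = m fC a + m fC (b - a) := by
        rw [← hm_add_right]; congr 1; abel
      have hba : ‖b - a‖ < ε/3 := by rwa [norm_sub_rev]
      have hTbval : T b = b - m fC b := rfl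
      rw [dist_eq_norm, hTbval]
      have : a - (b - m fC b) = (a - b) + m fC b := by abel
      rw [this, hsplit]
      calc ‖a - b + (m fC a + m fC (b - a))‖
          ≤ ‖a - b‖ + ‖m fC a + m fC (b - a)‖ := norm_add_le _ _
        _ ≤ ‖a - b‖ + (‖m fC a‖ + ‖m fC (b - a)‖) := by
            gcongr; exact norm_add_le _ _
        _ < ε := by linarith
    · -- easy inclusion: closure (span S₀) ⊆ ker π x₀
      have hker_closed : IsClosed {a : A | π x₀ a = 0} :=
        isClosed_eq (hπcont x₀) continuous_const
      refine closure_minimal ?_ hker_closed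
      have h1 : Submodule.span ℂ S₀ ≤ LinearMap.ker (π x₀).toAlgHom.toLinearMap := by
        rw [Submodule.span_le]
        rintro y ⟨f, a, hf, rfl⟩
        simp only [SetLike.mem_coe, LinearMap.mem_ker, AlgHom.toLinearMap_apply,
          StarAlgHom.coe_toAlgHom]
        rw [hm_pi, hf, zero_smul]
      intro v hv
      exact h1 hv
  · -- kernel description implies usc
    intro hker a y hy
    simp only at hy
    set t := ‖π x₀ a‖ with ht
    have ht0 : 0 ≤ t := norm_nonneg _
    have hy0 : 0 < y := lt_of_le_of_lt ht0 hy
    have hyt : t * t < y * y := by nlinarith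
    set r : ℝ := t * t + (y * y - t * t) / 2 with hrdef
    set η : ℝ := (y * y - t * t) / 4 with hηdef
    have hη : 0 < η := by simp only [hηdef]; nlinarith
    have hr0 : 0 ≤ r := by simp only [hrdef]; nlinarith
    set g : ℝ → ℝ := fun s => max (|s| - r) 0 with hgdef
    have hg : Continuous g := (continuous_abs.sub continuous_const).max continuous_const
    have hb : IsSelfAdjoint (star a * a) := .star_mul_self a
    set c := cfc g (star a * a) with hc
    have hπc : ∀ x, π x c = cfc g (π x (star a * a)) := fun x =>
      StarAlgHomClass.map_cfc (π x) g _ hg.continuousOn (hπcont x) hb (hb.map (π x))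
    have hc0 : π x₀ c = 0 := by
      obtain h | h := subsingleton_or_nontrivial (B x₀)
      · exact Subsingleton.elim _ _
      · rw [hπc x₀,
          show (0 : B x₀) = cfc (fun _ : ℝ => (0 : ℝ)) (π x₀ (star a * a)) from
            (cfc_const_zero ℝ _).symm]
        refine cfc_congr fun s hs => ?_
        have h1 : ‖s‖ ≤ ‖π x₀ (star a * a)‖ := spectrum.norm_le_norm_of_mem hs
        rw [map_mul, map_star, CStarRing.norm_star_mul_self] at h1
        have h2 : |s| ≤ t * t := by simpa [Real.norm_eq_abs, ← ht] using h1
        simp only [hgdef]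
        exact max_eq_right (by simp only [hrdef]; nlinarith)
    have hcclo : c ∈ closure (Submodule.span ℂ S₀ : Set A) := by
      rw [← hker]; exact hc0
    obtain ⟨c', hc'mem, hcc'⟩ := Metric.mem_closure_iff.mp hcclo (η/2) (by linarith)
    rw [dist_eq_norm] at hcc'
    have key : ∀ v ∈ Submodule.span ℂ S₀, ∀ δ : ℝ, 0 < δ → ∀ᶠ x in nhds x₀, ‖π x v‖ < δ := by
      intro v hv
      induction hv using Submodule.span_induction with
      | mem v hv =>
        obtain ⟨f, w, hf, rfl⟩ := hv
        intro δ hδ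
        have hten : Filter.Tendsto (fun x => ‖f x‖ * ‖w‖) (nhds x₀) (nhds 0) := by
          have h5 : Filter.Tendsto (fun x => ‖f x‖) (nhds x₀) (nhds 0) := by
            simpa [hf] using ((map_continuous f).tendsto x₀).norm
          simpa using h5.mul_const ‖w‖
        have hev : ∀ᶠ x in nhds x₀, ‖f x‖ * ‖w‖ < δ := hten.eventually_lt_const hδ
        filter_upwards [hev] with x hx
        calc ‖π x (m f w)‖ = ‖f x‖ * ‖π x w‖ := by rw [hm_pi, norm_smul]
          _ ≤ ‖f x‖ * ‖w‖ := mul_le_mul_of_nonneg_left (hπle x w) (norm_nonneg _)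
          _ < δ := hx
      | zero =>
        intro δ hδ
        filter_upwards with x
        simp [hδ]
      | add v w hv hw ihv ihw =>
        intro δ hδ
        filter_upwards [ihv (δ/2) (by linarith), ihw (δ/2) (by linarith)] with x h1 h2
        rw [map_add]
        calc ‖π x v + π x w‖ ≤ ‖π x v‖ + ‖π x w‖ := norm_add_le _ _
          _ < δ := by linarith
      | smul cc v hv ih =>
        intro δ hδ
        filter_upwards [ih (δ/(‖cc‖+1)) (by positivity)] with x h1
        rw [map_smul, norm_smul]
        have hM : (0:ℝ) < ‖cc‖ + 1 := by positivity
        have h2 := (lt_div_iff₀ hM).mp h1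
        nlinarith [norm_nonneg (π x v), norm_nonneg cc]
    have hevc : ∀ᶠ x in nhds x₀, ‖π x c‖ < η := by
      filter_upwards [key c' hc'mem (η/2) (by linarith)] with x h1
      have h2 : ‖π x c‖ ≤ ‖π x (c - c')‖ + ‖π x c'‖ := by
        calc ‖π x c‖ = ‖π x (c - c') + π x c'‖ := by rw [← map_add, sub_add_cancel]
          _ ≤ ‖π x (c - c')‖ + ‖π x c'‖ := norm_add_le _ _
      have h3 : ‖π x (c - c')‖ ≤ ‖c - c'‖ := hπle _ _
      linarith
    filter_upwards [hevc] with x hx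
    have hd : IsSelfAdjoint (π x (star a * a)) := hb.map (π x)
    have hnormd : ‖π x (star a * a)‖ ≤ r + η := by
      conv_lhs => rw [← cfc_id ℝ (π x (star a * a)) hd]
      refine norm_cfc_le (by linarith) fun s hs => ?_
      have h1 : ‖g s‖ ≤ ‖cfc g (π x (star a * a))‖ :=
        norm_apply_le_norm_cfc g _ hs hg.continuousOn hd
      rw [← hπc x] at h1
      have h2 : ‖g s‖ < η := lt_of_le_of_lt h1 hx
      have h3 : |g s| = g s := abs_of_nonneg (le_max_right _ _)
      have h4 : |s| - r ≤ g s := le_max_left _ _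
      rw [Real.norm_eq_abs] at h2
      rw [h3] at h2
      simp only [id_eq, Real.norm_eq_abs]
      linarith
    have hsq : ‖π x a‖ * ‖π x a‖ ≤ r + η := by
      rw [← CStarRing.norm_star_mul_self, ← map_star, ← map_mul]
      exact hnormd
    show ‖π x a‖ < y
    have hre : r + η = t*t + (y*y - t*t)/2 + (y*y - t*t)/4 := by rw [hrdef, hηdef]
    exact usc_aux_arith (norm_nonneg _) hy0 hyt (hre ▸ hsq)
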